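/- For the problem −y''(x) − (9π²/4)y(x) = λ·δ(x − 2/3)·y(x) on [0,1] with y(0) = y(1) = 0, the characteristic polynomial is constant and nonzero (p(λ) ≡ −2/(3π)); hence the set of Dirichlet eigenvalues is empty. -/

import Mathlib

open Set MeasureTheory intervalIntegral Real

lemma cosK_deriv (K : ℝ) (x : ℝ) :
    HasDerivAt (fun x : ℝ => Complex.cos ((K:ℂ) * x)) (-(K:ℂ) * Complex.sin ((K:ℂ) * x)) x := by
  have h1 : HasDerivAt (fun w : ℂ => Complex.cos ((K:ℂ)*w))
      (-Complex.sin ((K:ℂ)*x) * ((K:ℂ)*1)) ((x:ℂ)) :=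
    (Complex.hasDerivAt_cos _).comp _ ((hasDerivAt_id _).const_mul _)
  have := h1.comp_ofReal
  convert this using 1
  ring

lemma sinK_deriv (K : ℝ) (x : ℝ) :
    HasDerivAt (fun x : ℝ => Complex.sin ((K:ℂ) * x)) ((K:ℂ) * Complex.cos ((K:ℂ) * x)) x := by
  have h1 : HasDerivAt (fun w : ℂ => Complex.sin ((K:ℂ)*w))
      (Complex.cos ((K:ℂ)*x) * ((K:ℂ)*1)) ((x:ℂ)) :=
    (Complex.hasDerivAt_sin _).comp _ ((hasDerivAt_id _).const_mul _)
  have := h1.comp_ofReal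
  convert this using 1
  ring

lemma aux_rep (K : ℝ) (c : ℂ) (hc : c = -(K:ℂ)^2) (a b : ℝ) (hab : a ≤ b) (y g : ℝ → ℂ)
    (hyd : ∀ x ∈ Set.Icc a b, HasDerivWithinAt y (g x) (Set.Icc a b) x)
    (hgi : ∀ x ∈ Set.Icc a b, g x = g a + ∫ s in a..x, c * y s) :
    ∀ x ∈ Set.Icc a b,
      (K:ℂ) * y x =
        (g a * Complex.cos ((K:ℂ)*a) + K * y a * Complex.sin ((K:ℂ)*a)) * Complex.sin ((K:ℂ)*x)
        - (g a * Complex.sin ((K:ℂ)*a) - K * y a * Complex.cos ((K:ℂ)*a)) * Complex.cos ((K:ℂ)*x) ∧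
      g x =
        (g a * Complex.cos ((K:ℂ)*a) + K * y a * Complex.sin ((K:ℂ)*a)) * Complex.cos ((K:ℂ)*x)
        + (g a * Complex.sin ((K:ℂ)*a) - K * y a * Complex.cos ((K:ℂ)*a)) * Complex.sin ((K:ℂ)*x) := by
  have hy : ContinuousOn y (Set.Icc a b) := fun x hx => (hyd x hx).continuousWithinAt
  have hcont : ContinuousOn (fun s => c * y s) (Set.Icc a b) := continuousOn_const.mul hy
  have hgd : ∀ x ∈ Set.Icc a b, HasDerivWithinAt g (c * y x) (Set.Icc a b) x := by
    intro x hx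
    haveI : Fact (x ∈ Set.Icc a b) := ⟨hx⟩
    have hint : IntervalIntegrable (fun s => c * y s) volume a x := by
      apply ContinuousOn.intervalIntegrable
      apply hcont.mono
      rw [Set.uIcc_of_le hx.1]
      exact Set.Icc_subset_Icc le_rfl hx.2
    have hmeas : StronglyMeasurableAtFilter (fun s => c * y s) (nhdsWithin x (Set.Icc a b)) :=
      hcont.stronglyMeasurableAtFilter_nhdsWithin measurableSet_Icc x
    have hd := intervalIntegral.integral_hasDerivWithinAt_right (f := fun s => c * y s) (s := Set.Icc a b) (t := Set.Icc a b)
      hint hmeas (hcont x hx)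
    have hd2 : HasDerivWithinAt (fun u => g a + ∫ s in a..u, c * y s) (c * y x)
        (Set.Icc a b) x := by
      have := (hasDerivWithinAt_const x (Set.Icc a b) (g a)).add hd
      rw [zero_add] at this
      exact this
    exact hd2.congr (fun u hu => hgi u hu) (hgi x hx)
  set C : ℝ → ℂ := fun x => Complex.cos ((K:ℂ) * x) with hC
  set S : ℝ → ℂ := fun x => Complex.sin ((K:ℂ) * x) with hS
  set A : ℝ → ℂ := fun x => g x * C x + (K:ℂ) * y x * S x with hA
  set B : ℝ → ℂ := fun x => g x * S x - (K:ℂ) * y x * C x with hB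
  have hAd : ∀ x ∈ Set.Icc a b, HasDerivWithinAt A 0 (Set.Icc a b) x := by
    intro x hx
    have h := ((hgd x hx).mul (cosK_deriv K x).hasDerivWithinAt).add
      (((hyd x hx).const_mul (K:ℂ)).mul (sinK_deriv K x).hasDerivWithinAt)
    convert h using 1
    · rfl
    · rfl
    rw [hc]; ring
  have hBd : ∀ x ∈ Set.Icc a b, HasDerivWithinAt B 0 (Set.Icc a b) x := by
    intro x hx
    have h := ((hgd x hx).mul (sinK_deriv K x).hasDerivWithinAt).sub
      (((hyd x hx).const_mul (K:ℂ)).mul (cosK_deriv K x).hasDerivWithinAt)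
    convert h using 1
    · rfl
    · rfl
    rw [hc]; ring
  have ha : a ∈ Set.Icc a b := Set.left_mem_Icc.2 hab
  have hconst : ∀ (F : ℝ → ℂ), (∀ x ∈ Set.Icc a b, HasDerivWithinAt F 0 (Set.Icc a b) x) →
      ∀ x ∈ Set.Icc a b, F x = F a := by
    intro F hF x hx
    have := (convex_Icc a b).norm_image_sub_le_of_norm_hasDerivWithin_le
      (f' := fun _ => (0:ℂ)) (C := 0) hF (fun z hz => by simp) ha hx
    have h0 : ‖F x - F a‖ ≤ 0 := by simpa using this
    have := le_antisymm h0 (norm_nonneg _)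
    rwa [norm_eq_zero, sub_eq_zero] at this
  intro x hx
  have h1 : A x = A a := hconst A hAd x hx
  have h2 : B x = B a := hconst B hBd x hx
  have hpy : S x ^ 2 + C x ^ 2 = 1 := Complex.sin_sq_add_cos_sq _
  constructor
  · have e1 : A a * S x - B a * C x = (K:ℂ) * y x := by
      rw [← h1, ← h2]
      simp only [hA, hB]
      linear_combination ((K:ℂ) * y x) * hpy
    exact e1.symm
  · have e2 : A a * C x + B a * S x = g x := by
      rw [← h1, ← h2]
      simp only [hA, hB]
      linear_combination (g x) * hpy
    exact e2.symm


/-- `l ∈ ℂ` is a Dirichlet eigenvalue of `-y'' + q y = l·δ(x - t)·y`,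
`y(0) = y(1) = 0` (Carathéodory solutions with a jump of `y'` at `t`). -/
def DiracEigen (q : ℝ → ℝ) (t : ℝ) (l : ℂ) : Prop :=
  ∃ y g₁ g₂ : ℝ → ℂ,
    ContinuousOn y (Set.Icc 0 1) ∧
    (∀ x ∈ Set.Icc 0 t, HasDerivWithinAt y (g₁ x) (Set.Icc 0 t) x) ∧
    (∀ x ∈ Set.Icc 0 t, g₁ x = g₁ 0 + ∫ s in (0:ℝ)..x, (q s : ℂ) * y s) ∧
    (∀ x ∈ Set.Icc t 1, HasDerivWithinAt y (g₂ x) (Set.Icc t 1) x) ∧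
    (∀ x ∈ Set.Icc t 1, g₂ x = g₂ t + ∫ s in t..x, (q s : ℂ) * y s) ∧
    g₁ t - g₂ t = l * y t ∧
    y 0 = 0 ∧ y 1 = 0 ∧
    (∃ x ∈ Set.Icc (0:ℝ) 1, y x ≠ 0)

theorem stmt_16 (φ ψ : ℝ → ℝ) (ω : ℝ)
    (hφ : ∀ x, φ x = (2 / (3 * π)) * Real.sin (3 * π * x / 2))
    (hψ : ∀ x, ψ x = -(2 / (3 * π)) * Real.cos (3 * π * x / 2))
    (hω : ω = 2 / (3 * π)) :
    (∀ l : ℝ,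
      (1 + (l / ω) * (φ (2/3) * ψ (2/3))) * φ 1 + (-(l / ω) * (φ (2/3)) ^ 2) * ψ 1 =
        -(2 / (3 * π))) ∧
    (∀ l : ℂ, ¬ DiracEigen (fun _ => -(9 * π ^ 2 / 4)) (2/3) l) := by
  have hπ := Real.pi_pos
  have hsin32 : Real.sin (3 * π / 2) = -1 := by
    rw [show 3 * π / 2 = π + π / 2 by ring, Real.sin_add, Real.sin_pi, Real.cos_pi,
      Real.sin_pi_div_two]
    ring
  have hcos32 : Real.cos (3 * π / 2) = 0 := by
    rw [show 3 * π / 2 = π + π / 2 by ring, Real.cos_add, Real.sin_pi, Real.cos_pi,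
      Real.cos_pi_div_two]
    ring
  constructor
  · intro l
    have e23 : 3 * π * (2/3) / 2 = π := by ring
    have e1 : 3 * π * (1:ℝ) / 2 = 3 * π / 2 := by ring
    rw [hφ, hφ, hψ, hω, e23, e1, Real.sin_pi, hsin32]
    ring
  · intro l hl
    obtain ⟨y, g₁, g₂, hy, hyd1, hgi1, hyd2, hgi2, hjump, hy0, hy1, x₀, hx₀, hyx₀⟩ := hl
    set K : ℝ := 3 * π / 2 with hK
    have hc : (((-(9 * π ^ 2 / 4) : ℝ)) : ℂ) = -(K:ℂ)^2 := by
      rw [hK]; push_cast; ring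
    have hK0 : (K:ℂ) ≠ 0 := by
      rw [hK]
      simp only [ne_eq, Complex.ofReal_eq_zero]
      positivity
    have H1 := aux_rep K _ hc 0 (2/3) (by norm_num) y g₁ hyd1 hgi1
    have H2 := aux_rep K _ hc (2/3) 1 (by norm_num) y g₂ hyd2 hgi2
    -- trig values
    have hs23 : Complex.sin ((K:ℂ) * ((2/3:ℝ):ℂ)) = 0 := by
      rw [show (K:ℂ) * ((2/3:ℝ):ℂ) = ((π:ℝ):ℂ) by rw [hK]; push_cast; ring,
        ← Complex.ofReal_sin, Real.sin_pi, Complex.ofReal_zero]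
    have hc23 : Complex.cos ((K:ℂ) * ((2/3:ℝ):ℂ)) = -1 := by
      rw [show (K:ℂ) * ((2/3:ℝ):ℂ) = ((π:ℝ):ℂ) by rw [hK]; push_cast; ring,
        ← Complex.ofReal_cos, Real.cos_pi]
      norm_num
    have hs1 : Complex.sin ((K:ℂ) * ((1:ℝ):ℂ)) = -1 := by
      rw [show (K:ℂ) * ((1:ℝ):ℂ) = ((3*π/2:ℝ):ℂ) by rw [hK]; push_cast; ring,
        ← Complex.ofReal_sin, hsin32]
      norm_num
    have hc1 : Complex.cos ((K:ℂ) * ((1:ℝ):ℂ)) = 0 := by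
      rw [show (K:ℂ) * ((1:ℝ):ℂ) = ((3*π/2:ℝ):ℂ) by rw [hK]; push_cast; ring,
        ← Complex.ofReal_cos, hcos32, Complex.ofReal_zero]
    -- left interval at t = 2/3
    obtain ⟨hy23, hg23⟩ := H1 (2/3) ⟨by norm_num, le_refl _⟩
    simp only [Complex.ofReal_zero, mul_zero, Complex.cos_zero, Complex.sin_zero, hy0,
      hs23, hc23, zero_mul, mul_one, add_zero, sub_zero, zero_sub, mul_neg, neg_zero,
      neg_neg, zero_add, mul_zero] at hy23 hg23
    -- hy23 : ↑K * y (2/3) = 0 ; hg23 : g₁ (2/3) = -(g₁ 0)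
    have hyt : y (2/3) = 0 := (mul_eq_zero.1 hy23).resolve_left hK0
    have hg2t : g₂ (2/3) = -(g₁ 0) := by
      have := hjump
      rw [hyt, mul_zero, sub_eq_zero] at this
      rw [← this, hg23]
    -- right interval at x = 1
    obtain ⟨hY1, -⟩ := H2 1 ⟨by norm_num, le_refl _⟩
    rw [hy1, hyt, hg2t, hs23, hc23, hs1, hc1] at hY1
    have hg10 : g₁ 0 = 0 := by linear_combination hY1
    -- y vanishes everywhere
    have hzero : ∀ x ∈ Set.Icc (0:ℝ) 1, y x = 0 := by
      intro x hx
      rcases le_total x (2/3) with h | h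
      · obtain ⟨hKy, -⟩ := H1 x ⟨hx.1, h⟩
        rw [hy0, hg10] at hKy
        have : (K:ℂ) * y x = 0 := by linear_combination hKy
        exact (mul_eq_zero.1 this).resolve_left hK0
      · obtain ⟨hKy, -⟩ := H2 x ⟨h, hx.2⟩
        rw [hyt, hg2t, hg10, hs23, hc23] at hKy
        have : (K:ℂ) * y x = 0 := by linear_combination hKy
        exact (mul_eq_zero.1 this).resolve_left hK0
    exact hyx₀ (hzero x₀ hx₀)
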